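/- Let X be a feasible solution of the semidefinite program MT(mu, r, Y) for vectors Y = (Y_1, ..., Y_k) in R^d. Define a symmetric matrix W in R^{(k+d+1)x(k+d+1)} with rows and columns indexed by 1, sigma_1, ..., sigma_k, v_1, ..., v_d, by: W_{sigma_i, sigma_j} = 4*X_{b_i, b_j} - 2*X_{1, b_i} - 2*X_{1, b_j} + 1, W_{v_i, v_j} = X_{v_i, v_j}, W_{1,1} = 1, W_{1, v_i} = X_{1, v_i}, W_{1, sigma_i} = 2*X_{1, b_i} - 1, and W_{v_i, sigma_j} = 2*X_{v_i, b_j} - X_{1, v_i}. Then W is positive semidefinite and satisfies W_{sigma_i, sigma_i} = 1 for all i and sum_{i=1}^d W_{v_i, v_i} = 1; that is, W is a feasible solution of the semidefinite relaxation TOR. -/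
import Mathlib


/-- Index set for the SDPs `MT` and `TOR`: the symbol `1`, then
`b_1, …, b_k` (resp. `σ_1, …, σ_k`), then `v_1, …, v_d`. -/
abbrev MTIdx (k d : ℕ) := Unit ⊕ Fin k ⊕ Fin d

def MTone {k d : ℕ} : MTIdx k d := Sum.inl ()
def MTb {k d : ℕ} (i : Fin k) : MTIdx k d := Sum.inr (Sum.inl i)
def MTv {k d : ℕ} (j : Fin d) : MTIdx k d := Sum.inr (Sum.inr j)

/-- Feasibility for the SDP `MT(μ, r, Y)`. -/
def MTFeasible {k d : ℕ} (x : Fin d → ℝ) (r : ℝ) (Y : Fin k → Fin d → ℝ)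
    (X : Matrix (MTIdx k d) (MTIdx k d) ℝ) : Prop :=
  X.PosSemidef ∧ X MTone MTone = 1 ∧ (∑ j, X (MTv j) (MTv j)) = 1 ∧
    (∀ i, X (MTb i) (MTb i) = X MTone (MTb i)) ∧
    ∀ i, (∑ j, X (MTb i) (MTv j) * (Y i j - x j)) ≥ r * X (MTb i) (MTb i)

/-- The matrix `W` constructed from a feasible solution `X` of `MT(μ, r, Y)`:
its rows and columns are indexed by `1, σ_1, …, σ_k, v_1, …, v_d`, where the
index `b_i` of `X` corresponds to the index `σ_i` of `W`. -/
def Wmat {k d : ℕ} (X : Matrix (MTIdx k d) (MTIdx k d) ℝ) :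
    Matrix (MTIdx k d) (MTIdx k d) ℝ :=
  Matrix.of fun a c =>
    match a, c with
    | Sum.inl _, Sum.inl _ => 1
    | Sum.inl _, Sum.inr (Sum.inl i) => 2 * X MTone (MTb i) - 1
    | Sum.inl _, Sum.inr (Sum.inr j) => X MTone (MTv j)
    | Sum.inr (Sum.inl i), Sum.inl _ => 2 * X MTone (MTb i) - 1
    | Sum.inr (Sum.inl i), Sum.inr (Sum.inl i') =>
        4 * X (MTb i) (MTb i') - 2 * X MTone (MTb i) - 2 * X MTone (MTb i') + 1
    | Sum.inr (Sum.inl i), Sum.inr (Sum.inr j) =>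
        2 * X (MTv j) (MTb i) - X MTone (MTv j)
    | Sum.inr (Sum.inr j), Sum.inl _ => X MTone (MTv j)
    | Sum.inr (Sum.inr j), Sum.inr (Sum.inl i) =>
        2 * X (MTv j) (MTb i) - X MTone (MTv j)
    | Sum.inr (Sum.inr j), Sum.inr (Sum.inr j') => X (MTv j) (MTv j')


open Matrix in
/-- The change-of-variables matrix `A` with `W = Aᴴ X A`. -/
def Amat (k d : ℕ) : Matrix (MTIdx k d) (MTIdx k d) ℝ :=
  Matrix.of fun a c =>
    match a, c with
    | Sum.inl _, Sum.inl _ => 1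
    | Sum.inl _, Sum.inr (Sum.inl _) => -1
    | Sum.inr (Sum.inl i), Sum.inr (Sum.inl i') => if i = i' then 2 else 0
    | Sum.inr (Sum.inr j), Sum.inr (Sum.inr j') => if j = j' then 1 else 0
    | _, _ => 0

open Matrix in
lemma wmat_eq_conj {k d : ℕ} (X : Matrix (MTIdx k d) (MTIdx k d) ℝ)
    (hsym : X.IsHermitian) (h11 : X MTone MTone = 1) :
    Wmat X = (Amat k d)ᴴ * X * Amat k d := by
  have hs : ∀ a c, X a c = X c a := fun a c => by
    have := congrFun (congrFun hsym c) a
    simpa [Matrix.conjTranspose_apply] using this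
  have h11' : X (Sum.inl PUnit.unit) (Sum.inl PUnit.unit) = 1 := h11
  ext a c
  rcases a with _ | a | a <;> rcases c with _ | c | c <;>
    simp [Wmat, Matrix.mul_apply, Amat, Fintype.sum_sum_type, Finset.mul_sum,
      Finset.sum_ite_eq, Finset.sum_ite_eq', MTone, MTb, MTv, mul_ite, ite_mul,
      show (() : Unit) = PUnit.unit from rfl] <;>
  first
    | exact h11'
    | exact h11'.symm
    | exact hs _ _
    | ring1
    | (rw [h11']; ring1)
    | (rw [hs (Sum.inr (Sum.inl _)) (Sum.inl _)]; first | ring1 | rw [h11']; ring1)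
    | (rw [hs (Sum.inr (Sum.inr _)) (Sum.inl _)]; ring1)
    | (rw [hs (Sum.inr (Sum.inl _)) (Sum.inr (Sum.inr _))]; ring1)

/-- If `X` is a feasible solution of `MT(μ, r, Y)`, then the matrix `W`
constructed from it is positive semidefinite, has `W_{1,1} = 1`,
`W_{σ_i, σ_i} = 1` for all `i`, and `∑ j, W_{v_j, v_j} = 1`; that is, `W` is a
feasible solution of the SDP relaxation `TOR`. -/
theorem wmat_feasible_TOR {k d : ℕ} (μ : Fin d → ℝ) (r : ℝ) (hr : 0 < r)
    (Y : Fin k → Fin d → ℝ) (X : Matrix (MTIdx k d) (MTIdx k d) ℝ)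
    (hX : MTFeasible μ r Y X) :
    (Wmat X).PosSemidef ∧ Wmat X MTone MTone = 1 ∧
      (∀ i, Wmat X (MTb i) (MTb i) = 1) ∧ (∑ j, Wmat X (MTv j) (MTv j)) = 1 := by
  obtain ⟨hpsd, h11, hv, hb, -⟩ := hX
  refine ⟨?_, rfl, fun i => ?_, ?_⟩
  · rw [wmat_eq_conj X hpsd.isHermitian h11]
    exact hpsd.conjTranspose_mul_mul_same _
  · show 4 * X (MTb i) (MTb i) - 2 * X MTone (MTb i) - 2 * X MTone (MTb i) + 1 = 1
    rw [hb i]; ring1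
  · exact hv
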